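/- Let G_1, G_2 be graphs in AND(1) (respectively c-AND(1)), w_1 ∈ V(G_1), w_2 ∈ V(G_2), and suppose w_2 is safe in G_2. Then the graph G obtained by identifying w_1 and w_2 belongs to AND(1) (respectively c-AND(1)). -/

import Mathlib

/-- An `AND(1)`-realization of `G`: each vertex `v` gets a closed interval
`[L v, R v]` and a representative point `p v` in it, with adjacency of distinct
vertices iff mutual containment of the representative points. -/
def IsAND1Real {V : Type*} (G : SimpleGraph V) (L R p : V → ℝ) : Prop :=
  (∀ v, L v ≤ p v ∧ p v ≤ R v) ∧
    ∀ u v : V, u ≠ v →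
      (G.Adj u v ↔ L u ≤ p v ∧ p v ≤ R u ∧ L v ≤ p u ∧ p u ≤ R v)

/-- A central (`c`-)`AND(1)`-realization: moreover each representative point is
the midpoint of its interval. -/
def IsCAND1Real {V : Type*} (G : SimpleGraph V) (L R p : V → ℝ) : Prop :=
  IsAND1Real G L R p ∧ ∀ v, p v = (L v + R v) / 2

/-- The class `AND(1)`. -/
def InAND1 {V : Type*} (G : SimpleGraph V) : Prop :=
  ∃ L R p : V → ℝ, IsAND1Real G L R p

/-- The class `c-AND(1)`. -/
def InCAND1 {V : Type*} (G : SimpleGraph V) : Prop :=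
  ∃ L R p : V → ℝ, IsCAND1Real G L R p

/-- A linear ordering of the vertices (an injective map to `ℝ`) satisfying the
four point condition: `x < u < v < y` with `xv, uy ∈ E` implies `uv ∈ E`. -/
def FourPointCond {V : Type*} (G : SimpleGraph V) (f : V → ℝ) : Prop :=
  Function.Injective f ∧
    ∀ x u v y : V, f x < f u → f u < f v → f v < f y →
      G.Adj x v → G.Adj u y → G.Adj u v

/-- A vertex `v` is safe in `G` (for `AND(1)`) if some `AND(1)`-realization of
`G` has `p v ∈ B w` only when `w = v` or `vw ∈ E(G)`. -/
def SafeAND1 {V : Type*} (G : SimpleGraph V) (v : V) : Prop :=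
  ∃ L R p : V → ℝ, IsAND1Real G L R p ∧
    ∀ w, L w ≤ p v → p v ≤ R w → w = v ∨ G.Adj v w

/-- A vertex `v` is safe in `G` (for `c-AND(1)`) if some
`c-AND(1)`-realization of `G` has `p v ∈ B w` only when `w = v` or
`vw ∈ E(G)`. -/
def SafeCAND1 {V : Type*} (G : SimpleGraph V) (v : V) : Prop :=
  ∃ L R p : V → ℝ, IsCAND1Real G L R p ∧
    ∀ w, L w ≤ p v → p v ≤ R w → w = v ∨ G.Adj v w

/-- The graph obtained from the disjoint union of `G₁` and `G₂` by identifying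
the vertices `w₁ ∈ V(G₁)` and `w₂ ∈ V(G₂)` (the merged vertex is `inl w₁`). -/
def glueAt {V₁ V₂ : Type*} (G₁ : SimpleGraph V₁) (G₂ : SimpleGraph V₂)
    (w₁ : V₁) (w₂ : V₂) : SimpleGraph (V₁ ⊕ {x : V₂ // x ≠ w₂}) where
  Adj a b := match a, b with
    | .inl u, .inl v => G₁.Adj u v
    | .inr u, .inr v => G₂.Adj u v
    | .inl u, .inr v => u = w₁ ∧ G₂.Adj w₂ v
    | .inr u, .inl v => v = w₁ ∧ G₂.Adj w₂ u
  symm := ⟨by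
    rintro (u | u) (v | v) h <;> simp_all [SimpleGraph.adj_comm]⟩
  loopless := ⟨by rintro (u | u) h <;> simp_all⟩

lemma exists_pos_lt_all {α : Type*} [Fintype α] (f : α → ℝ) (hf : ∀ a, 0 < f a) :
    ∃ ε : ℝ, 0 < ε ∧ ∀ a, ε < f a := by
  classical
  set s : Finset ℝ := insert 1 (Finset.univ.image f) with hs
  have hne : s.Nonempty := ⟨1, Finset.mem_insert_self _ _⟩
  have hpos : 0 < s.min' hne := by
    rcases Finset.mem_insert.1 (s.min'_mem hne) with h | h
    · rw [h]; norm_num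
    · obtain ⟨a, -, ha⟩ := Finset.mem_image.1 h
      rw [← ha]; exact hf a
  refine ⟨s.min' hne / 2, by linarith, fun a => ?_⟩
  have h1 : s.min' hne ≤ f a :=
    Finset.min'_le _ _ (Finset.mem_insert_of_mem (Finset.mem_image_of_mem f (Finset.mem_univ a)))
  linarith

/-- Any `AND(1)`-realization can be perturbed to one whose representative
points are pairwise distinct, preserving the midpoint property. -/
lemma exists_injective_real {V : Type*} [Fintype V] (G : SimpleGraph V) (L R p : V → ℝ)
    (h : IsAND1Real G L R p) :
    ∃ L' R' p', IsAND1Real G L' R' p' ∧ Function.Injective p' ∧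
      ((∀ v, p v = (L v + R v) / 2) → ∀ v, p' v = (L' v + R' v) / 2) := by
  classical
  obtain ⟨hin, hadj⟩ := h
  set M : ℝ := (Fintype.card V : ℝ) with hM
  have hM0 : 0 ≤ M := by positivity
  have h2M : (0 : ℝ) < 2 * M + 1 := by linarith
  set n : V → ℝ := fun v => ((Fintype.equivFin V v : ℕ) : ℝ) with hn
  have hn0 : ∀ v, 0 ≤ n v := fun v => by positivity
  have hnM : ∀ v, n v ≤ M := fun v => by
    have := (Fintype.equivFin V v).2
    simp only [hn, hM]
    exact_mod_cast this.le
  have hninj : ∀ u v : V, u ≠ v → n u ≠ n v := by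
    intro u v huv hh
    apply huv
    apply (Fintype.equivFin V).injective
    apply Fin.ext
    simp only [hn] at hh
    exact_mod_cast hh
  obtain ⟨ε₁, hε₁, hε₁'⟩ := exists_pos_lt_all
    (fun uv : V × V => if p uv.1 < L uv.2 then (L uv.2 - p uv.1) / (2 * M + 1) else 1)
    (by intro a; split_ifs with h <;> [exact div_pos (by linarith) h2M; norm_num])
  obtain ⟨ε₂, hε₂, hε₂'⟩ := exists_pos_lt_all
    (fun uv : V × V => if R uv.2 < p uv.1 then (p uv.1 - R uv.2) / (2 * M + 1) else 1)
    (by intro a; split_ifs with h <;> [exact div_pos (by linarith) h2M; norm_num])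
  set Bad : Set ℝ := Set.range (fun uv : V × V => (p uv.1 - p uv.2) / (n uv.2 - n uv.1)) with hBad
  have hBadfin : Bad.Finite := Set.finite_range _
  have hioo : (Set.Ioo (0 : ℝ) (min ε₁ ε₂) \ Bad).Nonempty :=
    ((Set.Ioo_infinite (lt_min hε₁ hε₂)).diff hBadfin).nonempty
  obtain ⟨ε, ⟨⟨hεpos, hεlt⟩, hεBad⟩⟩ := hioo
  have hεlt₁ : ε < ε₁ := lt_of_lt_of_le hεlt (min_le_left _ _)
  have hεlt₂ : ε < ε₂ := lt_of_lt_of_le hεlt (min_le_right _ _)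
  -- margin facts
  have marL : ∀ u v : V, p u < L v → p u + ε * n u < L v - ε * M + ε * n v := by
    intro u v huv
    have h1 := hε₁' (u, v)
    rw [if_pos huv] at h1
    have h2 : ε * (2 * M + 1) < L v - p u := by
      have := (lt_div_iff₀ h2M).1 (lt_trans hεlt₁ h1)
      linarith [this]
    have f1 : ε * n u ≤ ε * M := mul_le_mul_of_nonneg_left (hnM u) hεpos.le
    have f2 : 0 ≤ ε * n v := mul_nonneg hεpos.le (hn0 v)
    nlinarith
  have marR : ∀ u v : V, R v < p u → R v + ε * M + ε * n v < p u + ε * n u := by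
    intro u v huv
    have h1 := hε₂' (u, v)
    rw [if_pos huv] at h1
    have h2 : ε * (2 * M + 1) < p u - R v := by
      have := (lt_div_iff₀ h2M).1 (lt_trans hεlt₂ h1)
      linarith [this]
    have f1 : ε * n v ≤ ε * M := mul_le_mul_of_nonneg_left (hnM v) hεpos.le
    have f2 : 0 ≤ ε * n u := mul_nonneg hεpos.le (hn0 u)
    nlinarith
  refine ⟨fun v => L v - ε * M + ε * n v, fun v => R v + ε * M + ε * n v,
    fun v => p v + ε * n v, ⟨?_, ?_⟩, ?_, ?_⟩
  · intro v
    have := hin v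
    have f2 : 0 ≤ ε * M := mul_nonneg hεpos.le hM0
    constructor <;> dsimp only <;> linarith
  · intro u v huv
    rw [hadj u v huv]
    dsimp only
    constructor
    · rintro ⟨a, b, c, d⟩
      have f1 : ε * n u ≤ ε * M := mul_le_mul_of_nonneg_left (hnM u) hεpos.le
      have f2 : ε * n v ≤ ε * M := mul_le_mul_of_nonneg_left (hnM v) hεpos.le
      have f3 : 0 ≤ ε * n u := mul_nonneg hεpos.le (hn0 u)
      have f4 : 0 ≤ ε * n v := mul_nonneg hεpos.le (hn0 v)
      exact ⟨by linarith, by linarith, by linarith, by linarith⟩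
    · rintro ⟨a, b, c, d⟩
      refine ⟨?_, ?_, ?_, ?_⟩
      · by_contra hh; push_neg at hh; exact absurd a (not_le.2 (marL v u hh))
      · by_contra hh; push_neg at hh; exact absurd b (not_le.2 (marR v u hh))
      · by_contra hh; push_neg at hh; exact absurd c (not_le.2 (marL u v hh))
      · by_contra hh; push_neg at hh; exact absurd d (not_le.2 (marR u v hh))
  · intro u v huv
    dsimp only at huv
    by_contra hne
    have hnn : n v - n u ≠ 0 := sub_ne_zero.2 (hninj v u (Ne.symm hne))
    apply hεBad
    refine ⟨(u, v), ?_⟩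
    dsimp only
    rw [div_eq_iff hnn]
    linarith
  · intro hm v
    dsimp only
    rw [hm v]
    ring

set_option maxHeartbeats 1000000 in
/-- The key construction: gluing an injective realization of `G₁` with a safe
realization of `G₂`. -/
lemma glue_real {V₁ V₂ : Type*} [Fintype V₁] [Fintype V₂]
    (G₁ : SimpleGraph V₁) (G₂ : SimpleGraph V₂) (w₁ : V₁) (w₂ : V₂)
    (L₁ R₁ p₁ : V₁ → ℝ) (h₁ : IsAND1Real G₁ L₁ R₁ p₁) (hinj : Function.Injective p₁)
    (L₂ R₂ p₂ : V₂ → ℝ) (h₂ : IsAND1Real G₂ L₂ R₂ p₂)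
    (hsafe : ∀ w, L₂ w ≤ p₂ w₂ → p₂ w₂ ≤ R₂ w → w = w₂ ∨ G₂.Adj w₂ w) :
    ∃ L R p, IsAND1Real (glueAt G₁ G₂ w₁ w₂) L R p ∧
      ((∀ v, p₁ v = (L₁ v + R₁ v) / 2) → (∀ v, p₂ v = (L₂ v + R₂ v) / 2) →
        ∀ v, p v = (L v + R v) / 2) := by
  classical
  obtain ⟨hin₁, hadj₁⟩ := h₁
  obtain ⟨hin₂, hadj₂⟩ := h₂
  obtain ⟨ε, hε, hεlt⟩ := exists_pos_lt_all
    (fun u : V₁ => if p₁ u < L₁ w₁ then L₁ w₁ - p₁ u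
      else if R₁ w₁ < p₁ u then p₁ u - R₁ w₁ else 1)
    (by intro a; split_ifs <;> [linarith; linarith; norm_num])
  have hεL : ∀ u, p₁ u < L₁ w₁ → ε < L₁ w₁ - p₁ u := by
    intro u hu; have := hεlt u; rwa [if_pos hu] at this
  have hεR : ∀ u, R₁ w₁ < p₁ u → ε < p₁ u - R₁ w₁ := by
    intro u hu
    have h0 := (hin₁ w₁)
    have := hεlt u
    rw [if_neg (not_lt.2 (by linarith [h0.1, h0.2])), if_pos hu] at this
    exact this
  obtain ⟨δ, hδ, hδlt⟩ := exists_pos_lt_all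
    (fun u : V₁ => if u = w₁ then ε else |p₁ u - p₁ w₁|)
    (by
      intro a; split_ifs with h
      · exact hε
      · exact abs_pos.2 (sub_ne_zero.2 fun hh => h (hinj hh)))
  have hδε : δ < ε := by have := hδlt w₁; rwa [if_pos rfl] at this
  have hδu : ∀ u, u ≠ w₁ → δ < |p₁ u - p₁ w₁| := fun u hu => by
    have := hδlt u; rwa [if_neg hu] at this
  set c : ℝ := p₂ w₂ with hc
  set D : ℝ := Finset.univ.sup' ⟨w₂, Finset.mem_univ w₂⟩
      (fun v => max |L₂ v - c| |R₂ v - c|) with hD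
  have hDm : ∀ v : V₂, max |L₂ v - c| |R₂ v - c| ≤ D := fun v => by
    rw [hD]
    exact Finset.le_sup' (fun v => max |L₂ v - c| |R₂ v - c|) (Finset.mem_univ v)
  have hDL : ∀ v, |L₂ v - c| ≤ D := fun v =>
    le_trans (le_max_left _ _) (hDm v)
  have hDR : ∀ v, |R₂ v - c| ≤ D := fun v =>
    le_trans (le_max_right _ _) (hDm v)
  have hD0 : 0 ≤ D := le_trans (abs_nonneg _) (hDL w₂)
  set lam : ℝ := δ / (D + 1) with hlam
  have hlam0 : 0 < lam := div_pos hδ (by linarith)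
  have hlamD : lam * D < δ := by
    have h1 : lam * (D + 1) = δ := by
      rw [hlam]; field_simp
    nlinarith
  set t : ℝ := p₁ w₁ with ht
  -- the copy of `G₂` lives in the window `[t - δ, t + δ]`
  have bndL : ∀ v, t - δ ≤ lam * (L₂ v - c) + t ∧ lam * (L₂ v - c) + t ≤ t + δ := by
    intro v
    have h1 := abs_le.1 (hDL v)
    constructor <;> nlinarith [h1.1, h1.2]
  have bndR : ∀ v, t - δ ≤ lam * (R₂ v - c) + t ∧ lam * (R₂ v - c) + t ≤ t + δ := by
    intro v
    have h1 := abs_le.1 (hDR v)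
    constructor <;> nlinarith [h1.1, h1.2]
  have bndp : ∀ v, t - δ ≤ lam * (p₂ v - c) + t ∧ lam * (p₂ v - c) + t ≤ t + δ := by
    intro v
    have h1 := bndL v
    have h2 := bndR v
    have h3 := hin₂ v
    constructor <;>
      nlinarith [mul_le_mul_of_nonneg_left h3.1 hlam0.le,
        mul_le_mul_of_nonneg_left h3.2 hlam0.le]
  have hw₁ := hin₁ w₁
  refine ⟨(fun x => match x with
      | .inl u => if u = w₁ then L₁ w₁ - ε else L₁ u
      | .inr v => lam * (L₂ v.1 - c) + t),
    (fun x => match x with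
      | .inl u => if u = w₁ then R₁ w₁ + ε else R₁ u
      | .inr v => lam * (R₂ v.1 - c) + t),
    (fun x => match x with
      | .inl u => p₁ u
      | .inr v => lam * (p₂ v.1 - c) + t), ⟨?_, ?_⟩, ?_⟩
  · rintro (u | v)
    · rcases eq_or_ne u w₁ with rfl | hu
      · simp only [↓reduceIte]
        exact ⟨by linarith [hw₁.1], by linarith [hw₁.2]⟩
      · simp only [if_neg hu]
        exact hin₁ u
    · dsimp only
      have h3 := hin₂ v.1
      constructor <;>
        nlinarith [mul_le_mul_of_nonneg_left h3.1 hlam0.le,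
          mul_le_mul_of_nonneg_left h3.2 hlam0.le]
  · rintro (u | u) (v | v) hne
    · -- inl / inl
      have huv : u ≠ v := fun h => hne (by rw [h])
      show G₁.Adj u v ↔ _
      rw [hadj₁ u v huv]
      rcases eq_or_ne u w₁ with rfl | hu
      · simp only [↓reduceIte, if_neg huv.symm]
        constructor
        · rintro ⟨a, b, cc, d⟩
          exact ⟨by linarith, by linarith, cc, d⟩
        · rintro ⟨a, b, cc, d⟩
          refine ⟨?_, ?_, cc, d⟩
          · by_contra hh; push_neg at hh; have := hεL v hh; linarith
          · by_contra hh; push_neg at hh; have := hεR v hh; linarith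
      · rcases eq_or_ne v w₁ with rfl | hv
        · simp only [↓reduceIte, if_neg hu]
          constructor
          · rintro ⟨a, b, cc, d⟩
            exact ⟨a, b, by linarith, by linarith⟩
          · rintro ⟨a, b, cc, d⟩
            refine ⟨a, b, ?_, ?_⟩
            · by_contra hh; push_neg at hh; have := hεL u hh; linarith
            · by_contra hh; push_neg at hh; have := hεR u hh; linarith
        · simp only [if_neg hu, if_neg hv]
    · -- inl / inr
      show (u = w₁ ∧ G₂.Adj w₂ v.1) ↔ _
      have hb := bndp v.1
      rcases eq_or_ne u w₁ with rfl | hu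
      · simp only [↓reduceIte, true_and]
        constructor
        · intro hadj
          have h4 := (hadj₂ w₂ v.1 (Ne.symm v.2)).1 hadj
          refine ⟨by linarith [hw₁.1, hb.1], by linarith [hw₁.2, hb.2], ?_, ?_⟩
          · nlinarith [mul_le_mul_of_nonneg_left h4.2.2.1 hlam0.le]
          · nlinarith [mul_le_mul_of_nonneg_left h4.2.2.2 hlam0.le]
        · rintro ⟨-, -, h3, h4⟩
          have hL : L₂ v.1 ≤ c := by
            have := le_of_mul_le_mul_left
              (show lam * (L₂ v.1 - c) ≤ lam * 0 by rw [mul_zero]; linarith) hlam0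
            linarith
          have hR : c ≤ R₂ v.1 := by
            have := le_of_mul_le_mul_left
              (show lam * 0 ≤ lam * (R₂ v.1 - c) by rw [mul_zero]; linarith) hlam0
            linarith
          rcases hsafe v.1 hL hR with h | h
          · exact absurd h v.2
          · exact h
      · simp only [if_neg hu]
        constructor
        · rintro ⟨h, -⟩; exact absurd h hu
        · rintro ⟨-, -, h3, h4⟩
          exfalso
          have h5 := hδu u hu
          have hb1 := (bndL v.1).1
          have hb2 := (bndR v.1).2
          have habs : |p₁ u - t| ≤ δ := abs_le.2 ⟨by linarith, by linarith⟩
          linarith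
    · -- inr / inl
      show (v = w₁ ∧ G₂.Adj w₂ u.1) ↔ _
      have hb := bndp u.1
      rcases eq_or_ne v w₁ with rfl | hv
      · simp only [↓reduceIte, true_and]
        constructor
        · intro hadj
          have h4 := (hadj₂ w₂ u.1 (Ne.symm u.2)).1 hadj
          refine ⟨?_, ?_, by linarith [hw₁.1, hb.1], by linarith [hw₁.2, hb.2]⟩
          · nlinarith [mul_le_mul_of_nonneg_left h4.2.2.1 hlam0.le]
          · nlinarith [mul_le_mul_of_nonneg_left h4.2.2.2 hlam0.le]
        · rintro ⟨h3, h4, -, -⟩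
          have hL : L₂ u.1 ≤ c := by
            have := le_of_mul_le_mul_left
              (show lam * (L₂ u.1 - c) ≤ lam * 0 by rw [mul_zero]; linarith) hlam0
            linarith
          have hR : c ≤ R₂ u.1 := by
            have := le_of_mul_le_mul_left
              (show lam * 0 ≤ lam * (R₂ u.1 - c) by rw [mul_zero]; linarith) hlam0
            linarith
          rcases hsafe u.1 hL hR with h | h
          · exact absurd h u.2
          · exact h
      · simp only [if_neg hv]
        constructor
        · rintro ⟨h, -⟩; exact absurd h hv
        · rintro ⟨h3, h4, -, -⟩
          exfalso
          have h5 := hδu v hv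
          have hb1 := (bndL u.1).1
          have hb2 := (bndR u.1).2
          have habs : |p₁ v - t| ≤ δ := abs_le.2 ⟨by linarith, by linarith⟩
          linarith
    · -- inr / inr
      have huv : u.1 ≠ v.1 := fun h => hne (by rw [Subtype.ext h])
      show G₂.Adj u.1 v.1 ↔ _
      rw [hadj₂ u.1 v.1 huv]
      dsimp only
      constructor
      · rintro ⟨a, b, cc, d⟩
        refine ⟨?_, ?_, ?_, ?_⟩ <;>
          linarith [mul_le_mul_of_nonneg_left a hlam0.le,
            mul_le_mul_of_nonneg_left b hlam0.le,
            mul_le_mul_of_nonneg_left cc hlam0.le,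
            mul_le_mul_of_nonneg_left d hlam0.le]
      · rintro ⟨a, b, cc, d⟩
        refine ⟨?_, ?_, ?_, ?_⟩
        · have := le_of_mul_le_mul_left
            (show lam * (L₂ u.1 - c) ≤ lam * (p₂ v.1 - c) by linarith) hlam0
          linarith
        · have := le_of_mul_le_mul_left
            (show lam * (p₂ v.1 - c) ≤ lam * (R₂ u.1 - c) by linarith) hlam0
          linarith
        · have := le_of_mul_le_mul_left
            (show lam * (L₂ v.1 - c) ≤ lam * (p₂ u.1 - c) by linarith) hlam0
          linarith
        · have := le_of_mul_le_mul_left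
            (show lam * (p₂ u.1 - c) ≤ lam * (R₂ v.1 - c) by linarith) hlam0
          linarith
  · intro hm₁ hm₂
    rintro (u | v)
    · rcases eq_or_ne u w₁ with rfl | hu
      · simp only [↓reduceIte]
        have := hm₁ u
        linarith
      · simp only [if_neg hu]
        exact hm₁ u
    · dsimp only
      rw [hm₂ v.1]
      ring

/-- Gluing two `AND(1)` (resp. `c-AND(1)`) graphs by identifying a vertex of
the first with a safe vertex of the second yields an `AND(1)`
(resp. `c-AND(1)`) graph. -/
theorem glue_mem_and1_cand1 {V₁ V₂ : Type*} [Fintype V₁] [Fintype V₂]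
    (G₁ : SimpleGraph V₁) (G₂ : SimpleGraph V₂) (w₁ : V₁) (w₂ : V₂) :
    (InAND1 G₁ → SafeAND1 G₂ w₂ → InAND1 (glueAt G₁ G₂ w₁ w₂)) ∧
    (InCAND1 G₁ → SafeCAND1 G₂ w₂ → InCAND1 (glueAt G₁ G₂ w₁ w₂)) := by
  constructor
  · rintro ⟨L₁, R₁, p₁, h₁⟩ ⟨L₂, R₂, p₂, h₂, hsafe⟩
    obtain ⟨L₁', R₁', p₁', h₁', hinj, -⟩ := exists_injective_real G₁ L₁ R₁ p₁ h₁
    obtain ⟨L, R, p, hLRp, -⟩ :=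
      glue_real G₁ G₂ w₁ w₂ L₁' R₁' p₁' h₁' hinj L₂ R₂ p₂ h₂ hsafe
    exact ⟨L, R, p, hLRp⟩
  · rintro ⟨L₁, R₁, p₁, h₁, hm₁⟩ ⟨L₂, R₂, p₂, ⟨h₂, hm₂⟩, hsafe⟩
    obtain ⟨L₁', R₁', p₁', h₁', hinj, hm₁'⟩ := exists_injective_real G₁ L₁ R₁ p₁ h₁
    obtain ⟨L, R, p, hLRp, hm⟩ :=
      glue_real G₁ G₂ w₁ w₂ L₁' R₁' p₁' h₁' hinj L₂ R₂ p₂ h₂ hsafe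
    exact ⟨L, R, p, hLRp, hm (hm₁' hm₁) hm₂⟩
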